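/- Let n ∈ [1,3). Then C₁ := (1/2) ∫_0^1 x (x³ − 3x + 2)(1 − x²)^(1−n) dx is finite, the function H₁(x) := (C₁/2)(1 − x²) − ∫_x^1 ∫_0^{x₁} x₂ (x₁ − x₂)(1 − x₂²)^(1−n) dx₂ dx₁ is well defined for x ∈ [0,1) and three times continuously differentiable on [0,1), and it satisfies H₁'''(x) = x (1 − x²)^(1−n) for all x ∈ (0,1), H₁'(0) = 0, H₁''(0) = −C₁, lim_{x→1⁻} H₁(x) = 0, and ∫_0^1 H₁(x) dx = 0. -/

import Mathlib

/-- First derivative within `[0,1)`. -/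
noncomputable def dIco (f : ℝ → ℝ) : ℝ → ℝ := derivWithin f (Set.Ico 0 1)

/-- Third derivative within `[0,1)`. -/
noncomputable def d3Ico (f : ℝ → ℝ) : ℝ → ℝ := dIco (dIco (dIco f))

open Set MeasureTheory intervalIntegral Filter
open scoped ContDiff

namespace CPG

variable {n : ℝ}

noncomputable def rr (n t : ℝ) : ℝ := (1 - t ^ 2) ^ (1 - n)

noncomputable def BB (n : ℝ) (k : ℕ) (x : ℝ) : ℝ := ∫ t in (0:ℝ)..x, t ^ k * rr n t

noncomputable def FF (n x : ℝ) : ℝ := x * BB n 1 x - BB n 2 x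

noncomputable def II (n : ℝ) : ℝ := ∫ t in (0:ℝ)..1, FF n t

noncomputable def PP (n x : ℝ) : ℝ := ∫ t in (0:ℝ)..x, FF n t

noncomputable def GG (n x : ℝ) : ℝ := II n - PP n x

noncomputable def KK (n y : ℝ) : ℝ :=
  y ^ 3 / 3 * BB n 1 y - y ^ 2 / 2 * BB n 2 y + 1 / 6 * BB n 4 y

noncomputable def CC (n : ℝ) : ℝ := ∫ t in (0:ℝ)..1, t * (t ^ 3 - 3 * t + 2) * rr n t

lemma rr_nonneg {t : ℝ} (h1 : -1 ≤ t) (h2 : t ≤ 1) : 0 ≤ rr n t :=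
  Real.rpow_nonneg (by nlinarith) _

lemma rr_contAt {t : ℝ} (ht : t ∈ Ioo (-1:ℝ) 1) : ContinuousAt (rr n) t := by
  have h : (0:ℝ) < 1 - t ^ 2 := by nlinarith [ht.1, ht.2]
  exact ((continuous_const.sub (continuous_pow 2)).continuousAt).rpow_const (Or.inl h.ne')

lemma rr_split {t : ℝ} (h1 : -1 ≤ t) (h2 : t ≤ 1) :
    rr n t = (1 - t) ^ (1 - n) * (1 + t) ^ (1 - n) := by
  rw [rr, show (1:ℝ) - t ^ 2 = (1 - t) * (1 + t) by ring,
    Real.mul_rpow (by linarith) (by linarith)]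

lemma rr_meas : Measurable (rr n) := by unfold rr; fun_prop

lemma cont_aux (hn3 : n < 3) :
    ContinuousOn (fun t : ℝ => (1 - t) ^ 2 * rr n t) (Icc (0:ℝ) 1) := by
  have h30 : (0:ℝ) < 3 - n := by linarith
  have hψ : ContinuousOn (fun t : ℝ => (1 + t) ^ (1 - n) * (1 - t) ^ (3 - n)) (Icc 0 1) := by
    apply ContinuousOn.mul
    · exact ContinuousOn.rpow_const (by fun_prop) (fun t ht => Or.inl (by simp at ht; linarith [ht.1]))
    · exact ContinuousOn.rpow_const (by fun_prop) (fun t ht => Or.inr h30.le)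
  refine hψ.congr ?_
  intro t ht
  rcases eq_or_lt_of_le ht.2 with h1 | h1
  · subst h1
    simp only [rr]
    norm_num
    right; exact Real.zero_rpow h30.ne'
  · have h0t : (0:ℝ) < 1 - t := by linarith
    show (1 - t) ^ 2 * rr n t = (1 + t) ^ (1 - n) * (1 - t) ^ (3 - n)
    rw [rr_split (by linarith [ht.1]) ht.2, ← Real.rpow_natCast (1 - t) 2]
    rw [show (1-t)^((2:ℕ):ℝ) * ((1-t)^(1-n) * (1+t)^(1-n))
        = ((1-t)^((2:ℕ):ℝ) * (1-t)^(1-n)) * (1+t)^(1-n) by ring, ← Real.rpow_add h0t]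
    norm_num
    ring

lemma int_sq (hn3 : n < 3) :
    IntervalIntegrable (fun t : ℝ => (1 - t) ^ 2 * rr n t) volume 0 1 := by
  apply ContinuousOn.intervalIntegrable
  rw [uIcc_of_le (zero_le_one)]
  exact cont_aux hn3

lemma bullet1 (hn3 : n < 3) :
    IntervalIntegrable (fun x : ℝ => x * (x ^ 3 - 3 * x + 2) * rr n x) volume 0 1 := by
  have h := (int_sq (n := n) hn3).continuousOn_mul (g := fun x : ℝ => x * (x + 2)) (by fun_prop)
  have heq : (fun x : ℝ => x * (x ^ 3 - 3 * x + 2) * rr n x)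
      = fun x : ℝ => (x * (x + 2)) * ((1 - x) ^ 2 * rr n x) := by
    funext x; ring
  rw [heq]; exact h

lemma ae_ne_one : ∀ᵐ t : ℝ, t ≠ 1 := by
  rw [ae_iff]
  simpa using measure_singleton (1:ℝ)

lemma int_lin (hn3 : n < 3) :
    IntervalIntegrable (fun t : ℝ => t * (1 - t) * rr n t) volume 0 1 := by
  have hbase : IntervalIntegrable (fun x : ℝ => x ^ (2 - n)) volume 0 1 :=
    intervalIntegrable_rpow' (by linarith)
  have h1 : IntervalIntegrable (fun x : ℝ => (1 - x) ^ (2 - n)) volume 0 1 := by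
    simpa using (hbase.comp_sub_left 1).symm
  have h2 := h1.continuousOn_mul (g := fun t : ℝ => t * (1 + t) ^ (1 - n)) ?cont
  case cont =>
    rw [uIcc_of_le (zero_le_one)]
    exact (continuousOn_id.mul (ContinuousOn.rpow_const (by fun_prop)
      (fun t ht => Or.inl (by simp at ht; linarith [ht.1]))))
  rw [intervalIntegrable_iff_integrableOn_Ioc_of_le zero_le_one] at h2 ⊢
  apply h2.congr
  filter_upwards [ae_restrict_mem measurableSet_Ioc,
    ae_restrict_of_ae (ae_ne_one)] with t ht hne
  have ht1 : t < 1 := lt_of_le_of_ne ht.2 hne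
  have h0t : (0:ℝ) < 1 - t := by linarith
  rw [rr_split (by linarith [ht.1]) ht.2]
  rw [show t * (1 + t) ^ (1 - n) * (1 - t) ^ (2 - n)
      = t * ((1 - t) ^ (2 - n) * (1 + t) ^ (1 - n)) by ring,
    show (2:ℝ) - n = 1 + (1 - n) by ring, Real.rpow_add h0t, Real.rpow_one]
  ring

lemma bullet2 (hn3 : n < 3) {x₁ : ℝ} (hx₁ : x₁ ∈ Icc (0:ℝ) 1) :
    IntervalIntegrable (fun t : ℝ => t * (x₁ - t) * rr n t) volume 0 x₁ := by
  rcases eq_or_lt_of_le hx₁.2 with h1 | h1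
  · subst h1
    exact int_lin hn3
  · apply ContinuousOn.intervalIntegrable
    intro t ht
    rw [uIcc_of_le hx₁.1] at ht
    exact ((continuousAt_id.mul (continuousAt_const.sub continuousAt_id)).mul
      (rr_contAt ⟨by linarith [ht.1], lt_of_le_of_lt ht.2 h1⟩)).continuousWithinAt

lemma Ico_subset_U : Ico (0:ℝ) 1 ⊆ Ioo (-1:ℝ) 1 := fun x hx => ⟨by linarith [hx.1], hx.2⟩

lemma uIcc_subset_U {x : ℝ} (hx : x ∈ Ioo (-1:ℝ) 1) : uIcc (0:ℝ) x ⊆ Ioo (-1:ℝ) 1 :=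
  (ordConnected_Ioo).uIcc_subset (by constructor <;> norm_num) hx

lemma pow_rr_contAt (k : ℕ) {t : ℝ} (ht : t ∈ Ioo (-1:ℝ) 1) :
    ContinuousAt (fun t : ℝ => t ^ k * rr n t) t :=
  (continuousAt_pow t k).mul (rr_contAt ht)

lemma pow_rr_intInt (k : ℕ) {x : ℝ} (hx : x ∈ Ioo (-1:ℝ) 1) :
    IntervalIntegrable (fun t : ℝ => t ^ k * rr n t) volume 0 x :=
  ContinuousOn.intervalIntegrable
    (fun t ht => (pow_rr_contAt k (uIcc_subset_U hx ht)).continuousWithinAt)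

lemma BB_hasDerivAt (k : ℕ) {x : ℝ} (hx : x ∈ Ioo (-1:ℝ) 1) :
    HasDerivAt (BB n k) (x ^ k * rr n x) x :=
  intervalIntegral.integral_hasDerivAt_right (pow_rr_intInt k hx)
    (ContinuousAt.stronglyMeasurableAtFilter isOpen_Ioo
      (fun t ht => pow_rr_contAt k ht) x hx)
    (pow_rr_contAt k hx)

lemma FF_hasDerivAt {x : ℝ} (hx : x ∈ Ioo (-1:ℝ) 1) :
    HasDerivAt (FF n) (BB n 1 x) x := by
  have h : HasDerivAt (fun y => y * BB n 1 y - BB n 2 y)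
      (1 * BB n 1 x + x * (x ^ 1 * rr n x) - x ^ 2 * rr n x) x :=
    ((hasDerivAt_id x).mul (BB_hasDerivAt 1 hx)).sub (BB_hasDerivAt 2 hx)
  unfold FF
  convert h using 1
  ring

lemma FF_contAt {x : ℝ} (hx : x ∈ Ioo (-1:ℝ) 1) : ContinuousAt (FF n) x :=
  (FF_hasDerivAt hx).continuousAt

lemma FF_intInt_of_mem {x : ℝ} (hx : x ∈ Ioo (-1:ℝ) 1) :
    IntervalIntegrable (FF n) volume 0 x :=
  ContinuousOn.intervalIntegrable
    (fun t ht => (FF_contAt (uIcc_subset_U hx ht)).continuousWithinAt)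

lemma FF_eq {x : ℝ} (hx0 : 0 ≤ x) (hx1 : x < 1) :
    FF n x = ∫ t in (0:ℝ)..x, t * (x - t) * rr n t := by
  have hxU : x ∈ Ioo (-1:ℝ) 1 := ⟨by linarith, hx1⟩
  have h1 : IntervalIntegrable (fun t : ℝ => x * (t ^ 1 * rr n t)) volume 0 x :=
    (pow_rr_intInt 1 hxU).const_mul x
  have h2 := pow_rr_intInt (n := n) 2 hxU
  calc FF n x = x * (∫ t in (0:ℝ)..x, t ^ 1 * rr n t) - ∫ t in (0:ℝ)..x, t ^ 2 * rr n t := rfl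
    _ = ∫ t in (0:ℝ)..x, (x * (t ^ 1 * rr n t) - t ^ 2 * rr n t) := by
        rw [integral_sub h1 h2, intervalIntegral.integral_const_mul]
    _ = ∫ t in (0:ℝ)..x, t * (x - t) * rr n t :=
        integral_congr (fun t _ => by ring)

lemma FF_nonneg {x : ℝ} (hx0 : 0 ≤ x) (hx1 : x < 1) : 0 ≤ FF n x := by
  rw [FF_eq hx0 hx1]
  apply intervalIntegral.integral_nonneg hx0
  intro t ht
  have h1 : 0 ≤ t := ht.1
  have h2 : t ≤ x := ht.2
  exact mul_nonneg (mul_nonneg h1 (by linarith)) (rr_nonneg (by linarith) (by linarith))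

noncomputable def MM (n : ℝ) : ℝ := ∫ t in (0:ℝ)..1, t * (1 - t) * rr n t

lemma FF_le (hn3 : n < 3) {x : ℝ} (hx0 : 0 ≤ x) (hx1 : x < 1) : FF n x ≤ MM n := by
  rw [FF_eq hx0 hx1]
  have hxU : x ∈ Ioo (-1:ℝ) 1 := ⟨by linarith, hx1⟩
  have hi1 : IntervalIntegrable (fun t : ℝ => t * (x - t) * rr n t) volume 0 x :=
    bullet2 hn3 ⟨hx0, hx1.le⟩
  have hi2 : IntervalIntegrable (fun t : ℝ => t * (1 - t) * rr n t) volume 0 x :=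
    (int_lin hn3).mono_set (by rw [uIcc_of_le hx0, uIcc_of_le zero_le_one]; exact Icc_subset_Icc le_rfl hx1.le)
  calc (∫ t in (0:ℝ)..x, t * (x - t) * rr n t)
      ≤ ∫ t in (0:ℝ)..x, t * (1 - t) * rr n t := by
        apply integral_mono_on hx0 hi1 hi2
        intro t ht
        have hr := rr_nonneg (n := n) (t := t) (by linarith [ht.1]) (by linarith [ht.2])
        have h1 : t * (x - t) ≤ t * (1 - t) := by nlinarith [ht.1, ht.2]
        exact mul_le_mul_of_nonneg_right h1 hr
    _ ≤ MM n := by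
        apply integral_mono_interval le_rfl hx0 hx1.le _ (int_lin hn3)
        filter_upwards [ae_restrict_mem measurableSet_Ioc] with t ht
        have hr := rr_nonneg (n := n) (t := t) (by linarith [ht.1]) ht.2
        simp only [Pi.zero_apply]
        exact mul_nonneg (mul_nonneg ht.1.le (by linarith [ht.2])) hr

lemma FF_intInt (hn3 : n < 3) : IntervalIntegrable (FF n) volume 0 1 := by
  rw [intervalIntegrable_iff_integrableOn_Ioc_of_le zero_le_one]
  rw [IntegrableOn, Measure.restrict_congr_set (Ioc_ae_eq_Icc.trans Ico_ae_eq_Icc.symm)]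
  constructor
  · exact (continuousOn_of_forall_continuousAt
      (fun x hx => FF_contAt (Ico_subset_U hx))).aestronglyMeasurable measurableSet_Ico
  · haveI : IsFiniteMeasure (volume.restrict (Ico (0:ℝ) 1)) :=
      ⟨by rw [Measure.restrict_apply_univ]; simp [Real.volume_Ico]⟩
    apply HasFiniteIntegral.of_bounded (C := MM n)
    filter_upwards [ae_restrict_mem measurableSet_Ico] with t ht
    rw [Real.norm_eq_abs, abs_of_nonneg (FF_nonneg ht.1 ht.2)]
    exact FF_le hn3 ht.1 ht.2

lemma FF_intInt_sub (hn3 : n < 3) {a b : ℝ} (ha : a ∈ Icc (0:ℝ) 1) (hb : b ∈ Icc (0:ℝ) 1) :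
    IntervalIntegrable (FF n) volume a b :=
  (FF_intInt hn3).mono_set (by
    rw [uIcc_of_le zero_le_one]
    exact (ordConnected_Icc).uIcc_subset ha hb)

lemma PP_hasDerivAt (hn3 : n < 3) {x : ℝ} (hx : x ∈ Ioo (-1:ℝ) 1) :
    HasDerivAt (PP n) (FF n x) x :=
  intervalIntegral.integral_hasDerivAt_right (FF_intInt_of_mem hx)
    (ContinuousAt.stronglyMeasurableAtFilter isOpen_Ioo
      (fun t ht => FF_contAt ht) x hx)
    (FF_contAt hx)

lemma GG_hasDerivAt (hn3 : n < 3) {x : ℝ} (hx : x ∈ Ioo (-1:ℝ) 1) :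
    HasDerivAt (GG n) (-FF n x) x := by
  have h := (PP_hasDerivAt hn3 hx).const_sub (II n)
  exact h

lemma PP_cont (hn3 : n < 3) : ContinuousOn (PP n) (Icc (0:ℝ) 1) := by
  have h : IntegrableOn (FF n) (uIcc (0:ℝ) 1) volume := by
    rw [uIcc_of_le zero_le_one, integrableOn_Icc_iff_integrableOn_Ioc]
    exact ((FF_intInt hn3).1 : IntegrableOn (FF n) (Ioc 0 1) volume)
  have := intervalIntegral.continuousOn_primitive_interval h
  rwa [uIcc_of_le zero_le_one] at this

lemma GG_cont (hn3 : n < 3) : ContinuousOn (GG n) (Icc (0:ℝ) 1) :=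
  continuousOn_const.sub (PP_cont hn3)

lemma GG_one : GG n 1 = 0 := sub_self _

lemma GG_eq (hn3 : n < 3) {x : ℝ} (hx : x ∈ Icc (0:ℝ) 1) :
    GG n x = ∫ t in x..(1:ℝ), FF n t := by
  have h1 : IntervalIntegrable (FF n) volume 0 x :=
    FF_intInt_sub hn3 (by constructor <;> norm_num) hx
  have h2 : IntervalIntegrable (FF n) volume x 1 :=
    FF_intInt_sub hn3 hx (by constructor <;> norm_num)
  have h := integral_add_adjacent_intervals h1 h2
  have : PP n x + ∫ t in x..(1:ℝ), FF n t = II n := h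
  rw [GG]
  linarith

lemma Ftilde_eq (hn3 : n < 3) : ∀ᵐ t : ℝ, t ∈ Ico (0:ℝ) 1 →
    (∫ s in (0:ℝ)..t, s * (t - s) * rr n s) = FF n t := by
  filter_upwards [] with t ht
  exact (FF_eq ht.1 ht.2).symm

lemma bullet3 (hn3 : n < 3) {x : ℝ} (hx : x ∈ Ico (0:ℝ) 1) :
    IntervalIntegrable (fun x₁ : ℝ => ∫ t in (0:ℝ)..x₁, t * (x₁ - t) * rr n t)
      volume x 1 := by
  rw [intervalIntegrable_iff_integrableOn_Ioc_of_le hx.2.le]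
  have hFF : IntegrableOn (FF n) (Ioc x 1) volume :=
    (FF_intInt_sub hn3 ⟨hx.1, hx.2.le⟩ (by constructor <;> norm_num)).1
  apply hFF.congr
  filter_upwards [ae_restrict_mem measurableSet_Ioc, ae_restrict_of_ae ae_ne_one]
    with t ht hne
  exact FF_eq (le_trans hx.1 ht.1.le) (lt_of_le_of_ne ht.2 hne)

lemma KK_hasDerivAt {y : ℝ} (hy : y ∈ Ioo (-1:ℝ) 1) :
    HasDerivAt (KK n) (y * FF n y) y := by
  have h1 := BB_hasDerivAt (n := n) 1 hy
  have h2 := BB_hasDerivAt (n := n) 2 hy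
  have h4 := BB_hasDerivAt (n := n) 4 hy
  have hp3 : HasDerivAt (fun y : ℝ => y ^ 3 / 3) (3 * y ^ 2 / 3) y :=
    (hasDerivAt_pow 3 y).div_const 3
  have hp2 : HasDerivAt (fun y : ℝ => y ^ 2 / 2) (2 * y ^ 1 / 2) y :=
    (hasDerivAt_pow 2 y).div_const 2
  have h : HasDerivAt (fun y : ℝ => y ^ 3 / 3 * BB n 1 y - y ^ 2 / 2 * BB n 2 y
      + 1 / 6 * BB n 4 y)
      ((3 * y ^ 2 / 3 * BB n 1 y + y ^ 3 / 3 * (y ^ 1 * rr n y))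
        - (2 * y ^ 1 / 2 * BB n 2 y + y ^ 2 / 2 * (y ^ 2 * rr n y))
        + 1 / 6 * (y ^ 4 * rr n y)) y :=
    ((hp3.mul h1).sub (hp2.mul h2)).add (h4.const_mul (1 / 6))
  unfold KK
  convert h using 1
  unfold FF
  ring

lemma KK_zero : KK n 0 = 0 := by
  unfold KK BB
  simp

lemma int_yF (hn3 : n < 3) {y : ℝ} (hy : y ∈ Ico (0:ℝ) 1) :
    ∫ x in (0:ℝ)..y, x * FF n x = KK n y := by
  have hd : ∀ x ∈ uIcc (0:ℝ) y, HasDerivAt (KK n) (x * FF n x) x := by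
    intro x hxx
    have hxU : x ∈ Ioo (-1:ℝ) 1 := uIcc_subset_U (Ico_subset_U hy) hxx
    exact KK_hasDerivAt hxU
  have hint : IntervalIntegrable (fun x => x * FF n x) volume 0 y :=
    ContinuousOn.intervalIntegrable (fun t ht =>
      (continuousAt_id.mul (FF_contAt (uIcc_subset_U (Ico_subset_U hy) ht))).continuousWithinAt)
  have := integral_eq_sub_of_hasDerivAt hd hint
  rw [this, KK_zero, sub_zero]

lemma GG_part (hn3 : n < 3) {y : ℝ} (hy : y ∈ Ico (0:ℝ) 1) :
    ∫ x in (0:ℝ)..y, GG n x = y * GG n y + KK n y := by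
  have hd : ∀ x ∈ uIcc (0:ℝ) y, HasDerivAt (fun x => x * GG n x + KK n x) (GG n x) x := by
    intro x hxx
    have hxU : x ∈ Ioo (-1:ℝ) 1 := uIcc_subset_U (Ico_subset_U hy) hxx
    have h : HasDerivAt (fun x : ℝ => x * GG n x + KK n x)
        ((1 * GG n x + x * -FF n x) + x * FF n x) x :=
      ((hasDerivAt_id x).mul (GG_hasDerivAt hn3 hxU)).add (KK_hasDerivAt hxU)
    convert h using 1
    ring
  have hint : IntervalIntegrable (GG n) volume 0 y := by
    apply ContinuousOn.intervalIntegrable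
    intro t ht
    have htU : t ∈ Ioo (-1:ℝ) 1 := uIcc_subset_U (Ico_subset_U hy) ht
    exact (GG_hasDerivAt hn3 htU).continuousAt.continuousWithinAt
  have := integral_eq_sub_of_hasDerivAt hd hint
  rw [this, KK_zero]
  ring

noncomputable def kk (n y t : ℝ) : ℝ :=
  y ^ 3 / 3 * (t ^ 1 * rr n t) - y ^ 2 / 2 * (t ^ 2 * rr n t) + 1 / 6 * (t ^ 4 * rr n t)

lemma KK_eq_integral {y : ℝ} (hy : y ∈ Ico (0:ℝ) 1) :
    KK n y = ∫ t in (0:ℝ)..y, kk n y t := by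
  have hyU : y ∈ Ioo (-1:ℝ) 1 := Ico_subset_U hy
  have i1 : IntervalIntegrable (fun t : ℝ => y ^ 3 / 3 * (t ^ 1 * rr n t)) volume 0 y :=
    (pow_rr_intInt 1 hyU).const_mul _
  have i2 : IntervalIntegrable (fun t : ℝ => y ^ 2 / 2 * (t ^ 2 * rr n t)) volume 0 y :=
    (pow_rr_intInt 2 hyU).const_mul _
  have i4 : IntervalIntegrable (fun t : ℝ => 1 / 6 * (t ^ 4 * rr n t)) volume 0 y :=
    (pow_rr_intInt 4 hyU).const_mul _
  unfold kk KK BB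
  rw [← intervalIntegral.integral_const_mul, ← intervalIntegral.integral_const_mul,
    ← intervalIntegral.integral_const_mul, ← integral_sub i1 i2, ← integral_add (i1.sub i2) i4]

lemma KK_eq_indicator {y : ℝ} (hy : y ∈ Ico (0:ℝ) 1) :
    KK n y = ∫ t, (Ioc (0:ℝ) y).indicator (kk n y) t
      ∂(volume.restrict (Ioc (0:ℝ) 1)) := by
  rw [KK_eq_integral hy, integral_of_le hy.1, MeasureTheory.integral_indicator measurableSet_Ioc,
    Measure.restrict_restrict measurableSet_Ioc,
    inter_eq_self_of_subset_left (Ioc_subset_Ioc_right hy.2.le)]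

lemma kk_contOn (y : ℝ) : ContinuousOn (kk n y) (Ioo (0:ℝ) 1) := by
  intro t ht
  have htU : t ∈ Ioo (-1:ℝ) 1 := ⟨by linarith [ht.1], ht.2⟩
  have c1 : ContinuousAt (fun t : ℝ => y ^ 3 / 3 * (t ^ 1 * rr n t)) t :=
    continuousAt_const.mul (pow_rr_contAt 1 htU)
  have c2 : ContinuousAt (fun t : ℝ => y ^ 2 / 2 * (t ^ 2 * rr n t)) t :=
    continuousAt_const.mul (pow_rr_contAt 2 htU)
  have c4 : ContinuousAt (fun t : ℝ => 1 / 6 * (t ^ 4 * rr n t)) t :=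
    continuousAt_const.mul (pow_rr_contAt 4 htU)
  exact ((c1.sub c2).add c4).continuousWithinAt

lemma kk_aesm (y : ℝ) :
    AEStronglyMeasurable (kk n y) (volume.restrict (Ioc (0:ℝ) 1)) := by
  rw [← Measure.restrict_congr_set Ioo_ae_eq_Ioc]
  exact (kk_contOn y).aestronglyMeasurable measurableSet_Ioo

lemma KK_tendsto (hn3 : n < 3) :
    Tendsto (KK n) (nhdsWithin 1 (Iio 1)) (nhds (CC n / 6)) := by
  set ν := volume.restrict (Ioc (0:ℝ) 1) with hν
  have hIco_mem : Ico (0:ℝ) 1 ∈ nhdsWithin (1:ℝ) (Iio 1) := by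
    have h1 : Ioi (0:ℝ) ∈ nhds (1:ℝ) := Ioi_mem_nhds one_pos
    have := inter_mem (mem_nhdsWithin_of_mem_nhds h1) (self_mem_nhdsWithin (a := (1:ℝ)) (s := Iio 1))
    exact mem_of_superset this (fun z hz => ⟨hz.1.le, hz.2⟩)
  have hlim : Tendsto (fun y => ∫ t, (Ioc (0:ℝ) y).indicator (kk n y) t ∂ν)
      (nhdsWithin 1 (Iio 1)) (nhds (∫ t, (fun t => t / 6 * (t ^ 3 - 3 * t + 2) * rr n t) t ∂ν)) := by
    apply MeasureTheory.tendsto_integral_filter_of_dominated_convergence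
      (bound := fun t => (1 - t) ^ 2 * rr n t)
    · filter_upwards [] with y
      exact (kk_aesm y).indicator measurableSet_Ioc
    · filter_upwards [hIco_mem] with y hy
      filter_upwards [ae_restrict_mem measurableSet_Ioc] with t ht
      by_cases hmem : t ∈ Ioc 0 y
      · rw [indicator_of_mem hmem]
        have hr := rr_nonneg (n := n) (t := t) (by linarith [ht.1]) ht.2
        have hkk : kk n y t = (t * (y - t) ^ 2 * (2 * y + t) / 6) * rr n t := by
          unfold kk; ring
        rw [hkk, Real.norm_eq_abs, abs_of_nonneg]
        · apply mul_le_mul_of_nonneg_right _ hr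
          have h1 : (y - t) ^ 2 ≤ (1 - t) ^ 2 := by nlinarith [hmem.2, hy.2, ht.1]
          have hB : (0:ℝ) ≤ 2 * y + t := by linarith [hmem.2, ht.1.le, hy.1]
          have hB3 : 2 * y + t ≤ 3 := by linarith [hy.2.le, ht.2]
          nlinarith [mul_le_mul h1 hB3 hB (sq_nonneg (1 - t)),
            mul_nonneg (mul_nonneg (show (0:ℝ) ≤ 1 - t by linarith [ht.2])
              (sq_nonneg (y - t))) hB]
        · apply mul_nonneg _ hr
          have h0 : (0:ℝ) ≤ t := ht.1.le
          have h1 : t ≤ y := hmem.2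
          have hB : (0:ℝ) ≤ 2 * y + t := by linarith
          have := mul_nonneg (mul_nonneg h0 (sq_nonneg (y - t))) hB
          linarith
      · rw [indicator_of_notMem hmem]
        simp only [norm_zero]
        exact mul_nonneg (sq_nonneg _) (rr_nonneg (by linarith [ht.1]) ht.2)
    · exact (int_sq hn3).1
    · filter_upwards [ae_restrict_mem measurableSet_Ioc, ae_restrict_of_ae ae_ne_one]
        with t ht hne
      have ht1 : t < 1 := lt_of_le_of_ne ht.2 hne
      have hev : ∀ᶠ y in nhdsWithin (1:ℝ) (Iio 1),
          (Ioc (0:ℝ) y).indicator (kk n y) t = kk n y t := by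
        filter_upwards [mem_nhdsWithin_of_mem_nhds (Ioi_mem_nhds ht1)] with y hy
        exact Set.indicator_of_mem (Set.mem_Ioc.mpr ⟨ht.1, le_of_lt hy⟩) _
      have hcont : Tendsto (fun y => kk n y t) (nhdsWithin (1:ℝ) (Iio 1))
          (nhds (kk n 1 t)) := by
        apply Tendsto.mono_left _ nhdsWithin_le_nhds
        exact (Continuous.tendsto (by unfold kk; fun_prop) 1)
      have hval : kk n 1 t = t / 6 * (t ^ 3 - 3 * t + 2) * rr n t := by
        unfold kk; ring
      rw [← hval]
      exact hcont.congr' (Filter.EventuallyEq.symm hev)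
  have heq : ∀ᶠ y in nhdsWithin (1:ℝ) (Iio 1),
      (∫ t, (Ioc (0:ℝ) y).indicator (kk n y) t ∂ν) = KK n y := by
    filter_upwards [hIco_mem] with y hy
    exact (KK_eq_indicator hy).symm
  have hCC : (∫ t, (fun t => t / 6 * (t ^ 3 - 3 * t + 2) * rr n t) t ∂ν) = CC n / 6 := by
    have h1 : (∫ t, (fun t => t / 6 * (t ^ 3 - 3 * t + 2) * rr n t) t ∂ν)
        = ∫ t in (0:ℝ)..1, t / 6 * (t ^ 3 - 3 * t + 2) * rr n t := by
      rw [integral_of_le zero_le_one]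
    rw [h1]
    have h2 : (fun t : ℝ => t / 6 * (t ^ 3 - 3 * t + 2) * rr n t)
        = fun t : ℝ => (1/6) * (t * (t ^ 3 - 3 * t + 2) * rr n t) := by
      funext t; ring
    rw [h2, intervalIntegral.integral_const_mul]
    unfold CC
    ring
  rw [← hCC]
  exact hlim.congr' heq

lemma nhds_eq : nhdsWithin (1:ℝ) (Iio 1) = nhdsWithin 1 (Ico (0:ℝ) 1) :=
  (nhdsWithin_Ico_eq_nhdsLT one_pos).symm

lemma GG_tendsto_cont (hn3 : n < 3) :
    Tendsto (GG n) (nhdsWithin 1 (Iio 1)) (nhds 0) := by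
  have h := ((GG_cont hn3) 1 (by constructor <;> norm_num)).tendsto
  rw [GG_one] at h
  apply h.mono_left
  rw [nhds_eq]
  exact nhdsWithin_mono 1 Ico_subset_Icc_self

lemma GG_integral (hn3 : n < 3) : ∫ x in (0:ℝ)..1, GG n x = CC n / 6 := by
  have hGc := GG_cont hn3
  have hint : IntegrableOn (GG n) (uIcc (0:ℝ) 1) volume := by
    rw [uIcc_of_le zero_le_one]
    exact hGc.integrableOn_Icc
  have hprim : Tendsto (fun y => ∫ x in (0:ℝ)..y, GG n x) (nhdsWithin 1 (Iio 1))
      (nhds (∫ x in (0:ℝ)..1, GG n x)) := by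
    have hc := (intervalIntegral.continuousOn_primitive_interval hint) 1
      (by rw [uIcc_of_le zero_le_one]; constructor <;> norm_num)
    have := hc.tendsto
    apply this.mono_left
    rw [nhds_eq, uIcc_of_le zero_le_one]
    exact nhdsWithin_mono 1 Ico_subset_Icc_self
  have hrhs : Tendsto (fun y => y * GG n y + KK n y) (nhdsWithin 1 (Iio 1))
      (nhds (CC n / 6)) := by
    have h1 : Tendsto (fun y : ℝ => y * GG n y) (nhdsWithin 1 (Iio 1)) (nhds 0) := by
      have := (tendsto_id.mono_left (nhdsWithin_le_nhds
        (s := Iio (1:ℝ)))).mul (GG_tendsto_cont hn3)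
      simpa using this
    have := h1.add (KK_tendsto hn3)
    simpa using this
  have heq : (fun y => ∫ x in (0:ℝ)..y, GG n x) =ᶠ[nhdsWithin 1 (Iio 1)]
      (fun y => y * GG n y + KK n y) := by
    rw [nhds_eq]
    filter_upwards [self_mem_nhdsWithin] with y hy
    exact GG_part hn3 hy
  exact tendsto_nhds_unique (hprim) (hrhs.congr' heq.symm)

noncomputable def Hf (n C x : ℝ) : ℝ := C / 2 * (1 - x ^ 2) - GG n x

lemma Hf_d1 (hn3 : n < 3) {C x : ℝ} (hx : x ∈ Ioo (-1:ℝ) 1) :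
    HasDerivAt (Hf n C) (-C * x + FF n x) x := by
  have hp : HasDerivAt (fun x : ℝ => C / 2 * (1 - x ^ 2))
      (C / 2 * (0 - 2 * x ^ 1)) x :=
    ((hasDerivAt_const x (1:ℝ)).sub (hasDerivAt_pow 2 x)).const_mul (C / 2)
  have h : HasDerivAt (fun x : ℝ => C / 2 * (1 - x ^ 2) - GG n x)
      (C / 2 * (0 - 2 * x ^ 1) - (-FF n x)) x := hp.sub (GG_hasDerivAt hn3 hx)
  unfold Hf
  convert h using 1
  ring

lemma Hf1_d {C x : ℝ} (hx : x ∈ Ioo (-1:ℝ) 1) :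
    HasDerivAt (fun x : ℝ => -C * x + FF n x) (-C + BB n 1 x) x := by
  have h : HasDerivAt (fun x : ℝ => -C * x + FF n x) (-C * 1 + BB n 1 x) x :=
    ((hasDerivAt_id x).const_mul (-C)).add (FF_hasDerivAt hx)
  convert h using 1
  ring

lemma Hf2_d {C x : ℝ} (hx : x ∈ Ioo (-1:ℝ) 1) :
    HasDerivAt (fun x : ℝ => -C + BB n 1 x) (x ^ 1 * rr n x) x :=
  (BB_hasDerivAt 1 hx).const_add (-C)

lemma Hf_contDiffOn (hn3 : n < 3) (C : ℝ) :
    ContDiffOn ℝ 3 (Hf n C) (Ioo (-1:ℝ) 1) := by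
  have hU : IsOpen (Ioo (-1:ℝ) 1) := isOpen_Ioo
  have hne : ∀ m : ℕ∞, (m : WithTop ℕ∞) = (ω : WithTop ℕ∞) → False := by
    intro m h
    exact (WithTop.coe_ne_top (a := m)) h
  have cd0 : ContDiffOn ℝ 0 (fun x : ℝ => x ^ 1 * rr n x) (Ioo (-1:ℝ) 1) := by
    rw [contDiffOn_zero]
    exact fun x hx => (pow_rr_contAt 1 hx).continuousWithinAt
  have cd1 : ContDiffOn ℝ 1 (fun x : ℝ => -C + BB n 1 x) (Ioo (-1:ℝ) 1) := by
    rw [show (1 : WithTop ℕ∞) = 0 + 1 by norm_num, contDiffOn_succ_iff_deriv_of_isOpen hU]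
    refine ⟨fun x hx => (Hf2_d hx).differentiableAt.differentiableWithinAt, ?_, ?_⟩
    · intro h; exact absurd h (by exact_mod_cast hne 0)
    · exact cd0.congr (fun x hx => (Hf2_d hx).deriv)
  have cd2 : ContDiffOn ℝ 2 (fun x : ℝ => -C * x + FF n x) (Ioo (-1:ℝ) 1) := by
    rw [show (2 : WithTop ℕ∞) = 1 + 1 by norm_num, contDiffOn_succ_iff_deriv_of_isOpen hU]
    refine ⟨fun x hx => (Hf1_d hx).differentiableAt.differentiableWithinAt, ?_, ?_⟩
    · intro h; exact absurd h (by exact_mod_cast hne 1)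
    · exact cd1.congr (fun x hx => (Hf1_d hx).deriv)
  rw [show (3 : WithTop ℕ∞) = 2 + 1 by norm_num, contDiffOn_succ_iff_deriv_of_isOpen hU]
  refine ⟨fun x hx => (Hf_d1 hn3 hx).differentiableAt.differentiableWithinAt, ?_, ?_⟩
  · intro h; exact absurd h (by exact_mod_cast hne 2)
  · exact cd2.congr (fun x hx => (Hf_d1 hn3 hx).deriv)

lemma Hf_cont (hn3 : n < 3) (C : ℝ) : ContinuousOn (Hf n C) (Icc (0:ℝ) 1) :=
  (Continuous.continuousOn (by fun_prop)).sub (GG_cont hn3)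

lemma Hf_one (C : ℝ) : Hf n C 1 = 0 := by
  unfold Hf
  rw [GG_one]
  norm_num

end CPG

open CPG in
/-- The general first-order correction profile for strong contact-line friction,
`n ∈ [1,3)`: the constant `C₁ = (1/2)∫₀¹ x(x³−3x+2)(1−x²)^{1−n} dx` is finite, the function
`H₁(x) = (C₁/2)(1−x²) − ∫ₓ¹ ∫₀^{x₁} x₂(x₁−x₂)(1−x₂²)^{1−n} dx₂ dx₁` is well defined and
C³ on `[0,1)`, and satisfies `H₁''' (x) = x(1−x²)^{1−n}` on `(0,1)`, `H₁'(0) = 0`,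
`H₁''(0) = −C₁`, `H₁(x) → 0` as `x → 1⁻`, and `∫₀¹ H₁ = 0`. -/
theorem correction_profile_general
    (n : ℝ) (hn : n ∈ Set.Ico (1:ℝ) 3)
    (C₁ : ℝ) (hC₁ : C₁ = 1 / 2 * ∫ x in (0:ℝ)..1, x * (x ^ 3 - 3 * x + 2) * (1 - x ^ 2) ^ (1 - n))
    (H₁ : ℝ → ℝ)
    (hH₁ : ∀ x ∈ Set.Ico (0:ℝ) 1, H₁ x =
      C₁ / 2 * (1 - x ^ 2) -
        ∫ x₁ in x..1, ∫ x₂ in (0:ℝ)..x₁, x₂ * (x₁ - x₂) * (1 - x₂ ^ 2) ^ (1 - n)) :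
    IntervalIntegrable (fun x => x * (x ^ 3 - 3 * x + 2) * (1 - x ^ 2) ^ (1 - n))
      MeasureTheory.volume 0 1 ∧
    (∀ x₁ ∈ Set.Icc (0:ℝ) 1, IntervalIntegrable
      (fun x₂ => x₂ * (x₁ - x₂) * (1 - x₂ ^ 2) ^ (1 - n)) MeasureTheory.volume 0 x₁) ∧
    (∀ x ∈ Set.Ico (0:ℝ) 1, IntervalIntegrable
      (fun x₁ => ∫ x₂ in (0:ℝ)..x₁, x₂ * (x₁ - x₂) * (1 - x₂ ^ 2) ^ (1 - n))
      MeasureTheory.volume x 1) ∧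
    ContDiffOn ℝ 3 H₁ (Set.Ico 0 1) ∧
    (∀ x ∈ Set.Ioo (0:ℝ) 1, d3Ico H₁ x = x * (1 - x ^ 2) ^ (1 - n)) ∧
    dIco H₁ 0 = 0 ∧
    dIco (dIco H₁) 0 = -C₁ ∧
    Filter.Tendsto H₁ (nhdsWithin 1 (Set.Iio 1)) (nhds 0) ∧
    (∫ x in (0:ℝ)..1, H₁ x) = 0 := by
  have hn3 : n < 3 := hn.2
  have hCC : C₁ = CC n / 2 := by
    rw [hC₁]
    show 1 / 2 * CC n = CC n / 2
    ring
  -- H₁ agrees with Hf on [0,1)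
  have hH₁' : Set.EqOn H₁ (Hf n C₁) (Set.Ico 0 1) := by
    intro x hx
    rw [hH₁ x hx]
    unfold Hf
    have h1 : (∫ x₁ in x..1, ∫ t in (0:ℝ)..x₁, t * (x₁ - t) * rr n t)
        = ∫ x₁ in x..1, FF n x₁ := by
      apply intervalIntegral.integral_congr_ae
      filter_upwards [ae_ne_one] with t hne ht
      rw [uIoc_of_le hx.2.le] at ht
      exact (FF_eq (le_trans hx.1 ht.1.le) (lt_of_le_of_ne ht.2 hne)).symm
    show C₁ / 2 * (1 - x ^ 2) - (∫ x₁ in x..1, ∫ t in (0:ℝ)..x₁, t * (x₁ - t) * rr n t)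
        = C₁ / 2 * (1 - x ^ 2) - GG n x
    rw [h1, GG_eq hn3 ⟨hx.1, hx.2.le⟩]
  have hUD := uniqueDiffOn_Ico (0:ℝ) 1
  -- first derivative within
  have hd1 : Set.EqOn (dIco H₁) (fun x => -C₁ * x + FF n x) (Set.Ico 0 1) := by
    intro x hx
    show derivWithin H₁ (Set.Ico 0 1) x = _
    rw [derivWithin_congr hH₁' (hH₁' hx)]
    exact ((Hf_d1 hn3 (Ico_subset_U hx)).hasDerivWithinAt).derivWithin (hUD x hx)
  have hd2 : Set.EqOn (dIco (dIco H₁)) (fun x => -C₁ + BB n 1 x) (Set.Ico 0 1) := by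
    intro x hx
    show derivWithin (dIco H₁) (Set.Ico 0 1) x = _
    rw [derivWithin_congr hd1 (hd1 hx)]
    exact ((Hf1_d (Ico_subset_U hx)).hasDerivWithinAt).derivWithin (hUD x hx)
  refine ⟨bullet1 hn3, ?_, ?_, ?_, ?_, ?_, ?_, ?_, ?_⟩
  · exact fun x₁ hx₁ => bullet2 hn3 hx₁
  · exact fun x hx => bullet3 hn3 hx
  · exact ((Hf_contDiffOn hn3 C₁).mono Ico_subset_U).congr hH₁'
  · intro x hx
    have hx' : x ∈ Set.Ico (0:ℝ) 1 := ⟨hx.1.le, hx.2⟩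
    show derivWithin (dIco (dIco H₁)) (Set.Ico 0 1) x = _
    rw [derivWithin_congr hd2 (hd2 hx')]
    have := ((Hf2_d (n := n) (C := C₁) (Ico_subset_U hx')).hasDerivWithinAt).derivWithin (hUD x hx')
    rw [this, pow_one]
    rfl
  · rw [hd1 ⟨le_refl 0, one_pos⟩]
    show -C₁ * 0 + ((0:ℝ) * BB n 1 0 - BB n 2 0) = 0
    unfold BB
    simp
  · rw [hd2 ⟨le_refl 0, one_pos⟩]
    show -C₁ + ∫ t in (0:ℝ)..0, t ^ 1 * rr n t = -C₁
    simp
  · have hHf0 : Filter.Tendsto (Hf n C₁) (nhdsWithin 1 (Set.Iio 1)) (nhds 0) := by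
      have h := ((Hf_cont hn3 C₁) 1 (by constructor <;> norm_num)).tendsto
      rw [Hf_one] at h
      apply h.mono_left
      rw [CPG.nhds_eq]
      exact nhdsWithin_mono 1 Set.Ico_subset_Icc_self
    apply hHf0.congr'
    rw [CPG.nhds_eq]
    filter_upwards [self_mem_nhdsWithin] with y hy
    exact (hH₁' hy).symm
  · have h1 : (∫ x in (0:ℝ)..1, H₁ x) = ∫ x in (0:ℝ)..1, Hf n C₁ x := by
      apply intervalIntegral.integral_congr_ae
      filter_upwards [ae_ne_one] with t hne ht
      rw [uIoc_of_le zero_le_one] at ht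
      exact hH₁' ⟨ht.1.le, lt_of_le_of_ne ht.2 hne⟩
    have hi1 : IntervalIntegrable (fun x : ℝ => C₁ / 2 * (1 - x ^ 2)) volume 0 1 :=
      (Continuous.intervalIntegrable (by fun_prop) 0 1)
    have hi2 : IntervalIntegrable (GG n) volume 0 1 := by
      apply ContinuousOn.intervalIntegrable
      rw [uIcc_of_le zero_le_one]
      exact GG_cont hn3
    have h2 : (∫ x in (0:ℝ)..1, Hf n C₁ x)
        = (∫ x in (0:ℝ)..1, C₁ / 2 * (1 - x ^ 2)) - ∫ x in (0:ℝ)..1, GG n x := by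
      unfold Hf
      exact integral_sub hi1 hi2
    have h3 : (∫ x in (0:ℝ)..1, C₁ / 2 * (1 - x ^ 2)) = C₁ / 3 := by
      rw [intervalIntegral.integral_const_mul]
      have hsub : (∫ x in (0:ℝ)..1, (1 - x ^ 2))
          = (∫ x in (0:ℝ)..1, (1:ℝ)) - ∫ x in (0:ℝ)..1, x ^ 2 :=
        integral_sub (Continuous.intervalIntegrable (by fun_prop) 0 1)
          (Continuous.intervalIntegrable (by fun_prop) 0 1)
      rw [hsub, integral_pow]
      simp
      ring
    rw [h1, h2, h3, GG_integral hn3, hCC]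
    ring
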